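/- arXiv:1803.10851 — 7 statements merged into one kernel-verified Lean document; each statement's English description precedes it below -/
import Mathlib

section
/- In any three-potent commutative integral residuated lattice, (x ∨ y²)² = (x ∨ y)². -/
/-- A commutative integral residuated lattice (CIRL): a lattice with maximum
element `1`, a commutative monoid structure with unit `1`, and a residuated
pair `(*, ⇨)`: `a * b ≤ c ↔ b ≤ a ⇨ c`. -/
class CIRL (α : Type*) extends Lattice α, CommMonoid α, HImp α where
  le_top : ∀ a : α, a ≤ 1
  resid : ∀ a b c : α, a * b ≤ c ↔ b ≤ a ⇨ c

section Aux
variable {α : Type*} [CIRL α]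

private lemma cirl_mono {a b : α} (c : α) (h : a ≤ b) : c * a ≤ c * b :=
  (CIRL.resid c a (c * b)).mpr (h.trans ((CIRL.resid c b (c * b)).mp le_rfl))

private lemma cirl_mul_le_left (a b : α) : a * b ≤ a := by
  calc a * b ≤ a * 1 := cirl_mono a (CIRL.le_top b)
    _ = a := mul_one a

private lemma cirl_mul_le_right (a b : α) : a * b ≤ b := by
  rw [mul_comm]; exact cirl_mul_le_left b a

private lemma cirl_mul_sup (a b c : α) : a * (b ⊔ c) = a * b ⊔ a * c := by
  apply le_antisymm
  · refine (CIRL.resid a _ _).mpr (sup_le ?_ ?_)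
    · exact (CIRL.resid a b _).mp le_sup_left
    · exact (CIRL.resid a c _).mp le_sup_right
  · exact sup_le (cirl_mono a le_sup_left) (cirl_mono a le_sup_right)

private lemma cirl_mul_le_mul {a b c d : α} (h1 : a ≤ b) (h2 : c ≤ d) :
    a * c ≤ b * d :=
  (cirl_mono a h2).trans (by rw [mul_comm a d, mul_comm b d]; exact cirl_mono d h1)

private lemma cirl_sq_eq_fourth (h3 : ∀ a : α, a * a ≤ a * a * a) (b : α) :
    b * b = (b * b) * (b * b) := by
  apply le_antisymm
  · calc b * b ≤ b * b * b := h3 b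
      _ = b * (b * b) := mul_assoc b b b
      _ ≤ b * (b * b * b) := cirl_mono b (h3 b)
      _ = b * (b * b) * b := by rw [← mul_assoc]
      _ = (b * b) * (b * b) := by rw [← mul_assoc, ← mul_assoc]
  · exact cirl_mul_le_left _ _

end Aux

theorem stmt2 {α : Type*} [CIRL α] (h3 : ∀ a : α, a * a ≤ a * a * a) (x y : α) :
    (x ⊔ y * y) * (x ⊔ y * y) = (x ⊔ y) * (x ⊔ y) := by
  apply le_antisymm
  · have h : x ⊔ y * y ≤ x ⊔ y :=
      sup_le le_sup_left ((cirl_mul_le_left y y).trans le_sup_right)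
    exact cirl_mul_le_mul h h
  · have hs : (x ⊔ y) * (x ⊔ y) ≤ x ⊔ y * y := by
      rw [cirl_mul_sup]
      refine sup_le ?_ ?_
      · exact (cirl_mul_le_right _ x).trans le_sup_left
      · rw [mul_comm (x ⊔ y) y, cirl_mul_sup]
        exact sup_le ((cirl_mul_le_right y x).trans le_sup_left) le_sup_right
    calc (x ⊔ y) * (x ⊔ y) = ((x ⊔ y) * (x ⊔ y)) * ((x ⊔ y) * (x ⊔ y)) :=
          cirl_sq_eq_fourth h3 _
      _ ≤ (x ⊔ y * y) * (x ⊔ y * y) := cirl_mul_le_mul hs hs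
end

section
/- In any three-potent commutative integral residuated lattice, (x ∨ y)² = x² ∨ y². -/
namespace CIRLaux

variable {α : Type*} [CIRL α]

lemma mul_le_mul_left' (a : α) {b c : α} (h : b ≤ c) : a * b ≤ a * c :=
  (CIRL.resid a b (a * c)).2 (le_trans h ((CIRL.resid a c (a * c)).1 le_rfl))

lemma mul_le_mul'' {a b c d : α} (h1 : a ≤ b) (h2 : c ≤ d) : a * c ≤ b * d := by
  calc a * c ≤ a * d := mul_le_mul_left' a h2
    _ = d * a := mul_comm a d
    _ ≤ d * b := mul_le_mul_left' d h1
    _ = b * d := mul_comm d b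

lemma mul_sup (a b c : α) : a * (b ⊔ c) = a * b ⊔ a * c := by
  apply le_antisymm
  · rw [CIRL.resid]
    exact sup_le ((CIRL.resid a b _).1 le_sup_left) ((CIRL.resid a c _).1 le_sup_right)
  · exact sup_le (mul_le_mul_left' a le_sup_left) (mul_le_mul_left' a le_sup_right)

lemma sup_mul (a b c : α) : (a ⊔ b) * c = a * c ⊔ b * c := by
  rw [mul_comm, mul_sup, mul_comm c a, mul_comm c b]

lemma mul_le_left (a b : α) : a * b ≤ a := by
  calc a * b ≤ a * 1 := mul_le_mul_left' a (CIRL.le_top b)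
    _ = a := mul_one a

lemma mul_le_right (a b : α) : a * b ≤ b := by
  rw [mul_comm]; exact mul_le_left b a

end CIRLaux

theorem stmt3 {α : Type*} [CIRL α] (h3 : ∀ a : α, a * a ≤ a * a * a) (x y : α) :
    (x ⊔ y) * (x ⊔ y) = x * x ⊔ y * y := by
  open CIRLaux in
  set s := x ⊔ y with hs
  have hexp : s * s = x * x ⊔ x * y ⊔ (y * x ⊔ y * y) := by
    rw [hs, CIRLaux.sup_mul, CIRLaux.mul_sup, CIRLaux.mul_sup]
  apply le_antisymm
  · have key : s * (s * s) ≤ x * x ⊔ y * y := by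
      rw [hexp, CIRLaux.mul_sup, CIRLaux.mul_sup, CIRLaux.mul_sup]
      have h1 : s * (x * x) ≤ x * x := CIRLaux.mul_le_right s (x * x)
      have h2 : s * (x * y) ≤ x * x ⊔ y * y := by
        rw [hs, CIRLaux.sup_mul]
        apply sup_le
        · calc x * (x * y) = x * x * y := (mul_assoc x x y).symm
            _ ≤ x * x := CIRLaux.mul_le_left _ y
            _ ≤ x * x ⊔ y * y := le_sup_left
        · calc y * (x * y) = y * y * x := by rw [mul_comm x y, ← mul_assoc]
            _ ≤ y * y := CIRLaux.mul_le_left _ x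
            _ ≤ x * x ⊔ y * y := le_sup_right
      have h3' : s * (y * x) ≤ x * x ⊔ y * y := by rw [mul_comm y x]; exact h2
      have h4 : s * (y * y) ≤ y * y := CIRLaux.mul_le_right s (y * y)
      exact sup_le (sup_le (le_sup_left.trans' h1) h2)
        (sup_le h3' (le_sup_right.trans' h4))
    calc s * s ≤ s * s * s := h3 s
      _ = s * (s * s) := mul_assoc s s s
      _ ≤ x * x ⊔ y * y := key
  · exact sup_le (CIRLaux.mul_le_mul'' le_sup_left le_sup_left)
      (CIRLaux.mul_le_mul'' le_sup_right le_sup_right)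
end

section
/- In a three-potent involutive CIBRL (S'-algebra), if d² ≤ b ∧ c then d² ≤ b * c. -/
/-- A commutative integral *bounded* residuated lattice (CIBRL): a CIRL whose
lattice order also has a minimum element `0`. -/
class CIBRL (α : Type*) extends CIRL α, Zero α where
  zero_le : ∀ a : α, (0 : α) ≤ a

lemma mul_le_mul'' {α : Type*} [CIRL α] {a b c d : α} (h1 : a ≤ b) (h2 : c ≤ d) :
    a * c ≤ b * d := by
  have hbd : b * c ≤ b * d := by
    rw [CIRL.resid]
    exact le_trans h2 ((CIRL.resid b d (b*d)).mp (le_refl _))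
  have hac : a * c ≤ b * c := by
    rw [mul_comm a c, mul_comm b c, CIRL.resid]
    exact le_trans h1 ((CIRL.resid c b (c*b)).mp (le_refl _))
  exact le_trans hac hbd

theorem stmt6 {α : Type*} [CIBRL α]
    (hinv : ∀ a : α, (a ⇨ 0) ⇨ 0 = a)
    (h3 : ∀ a : α, a * a ≤ a * a * a)
    (b c d : α) (h : d * d ≤ b ⊓ c) : d * d ≤ b * c := by
  have hb : d * d ≤ b := le_trans h inf_le_left
  have hc : d * d ≤ c := le_trans h inf_le_right
  have h4 : d * d * d * d ≤ b * c := by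
    have := mul_le_mul'' hb hc
    calc d * d * d * d = (d*d)*(d*d) := by rw [mul_assoc]
    _ ≤ b * c := this
  have h34 : d * d * d ≤ d * d * d * d := by
    have := mul_le_mul'' (h3 d) (le_refl d)
    calc d*d*d = (d*d)*d := rfl
    _ ≤ (d*d*d)*d := this
  exact le_trans (h3 d) (le_trans h34 h4)
end

section
/- There exists an 8-element three-potent involutive CIBRL (S'-algebra) whose underlying lattice is not distributive. -/
inductive A : Type
  | e0 | na | nb | nc | b | c | a | e1
  deriving DecidableEq

instance : Fintype A where
  elems := ⟨↑[A.e0, A.na, A.nb, A.nc, A.b, A.c, A.a, A.e1], by decide⟩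
  complete := by intro x; cases x <;> decide

def A.mul : A → A → A
  | .e0, .e0 => .e0
  | .e0, .na => .e0
  | .e0, .nb => .e0
  | .e0, .nc => .e0
  | .e0, .b => .e0
  | .e0, .c => .e0
  | .e0, .a => .e0
  | .e0, .e1 => .e0
  | .na, .e0 => .e0
  | .na, .na => .e0
  | .na, .nb => .e0
  | .na, .nc => .e0
  | .na, .b => .e0
  | .na, .c => .e0
  | .na, .a => .e0
  | .na, .e1 => .na
  | .nb, .e0 => .e0
  | .nb, .na => .e0
  | .nb, .nb => .nb
  | .nb, .nc => .e0
  | .nb, .b => .e0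
  | .nb, .c => .nb
  | .nb, .a => .nb
  | .nb, .e1 => .nb
  | .nc, .e0 => .e0
  | .nc, .na => .e0
  | .nc, .nb => .e0
  | .nc, .nc => .nc
  | .nc, .b => .nc
  | .nc, .c => .e0
  | .nc, .a => .nc
  | .nc, .e1 => .nc
  | .b, .e0 => .e0
  | .b, .na => .e0
  | .b, .nb => .e0
  | .b, .nc => .nc
  | .b, .b => .nc
  | .b, .c => .na
  | .b, .a => .nc
  | .b, .e1 => .b
  | .c, .e0 => .e0
  | .c, .na => .e0
  | .c, .nb => .nb
  | .c, .nc => .e0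
  | .c, .b => .na
  | .c, .c => .nb
  | .c, .a => .nb
  | .c, .e1 => .c
  | .a, .e0 => .e0
  | .a, .na => .e0
  | .a, .nb => .nb
  | .a, .nc => .nc
  | .a, .b => .nc
  | .a, .c => .nb
  | .a, .a => .a
  | .a, .e1 => .a
  | .e1, .e0 => .e0
  | .e1, .na => .na
  | .e1, .nb => .nb
  | .e1, .nc => .nc
  | .e1, .b => .b
  | .e1, .c => .c
  | .e1, .a => .a
  | .e1, .e1 => .e1
def A.sup : A → A → A
  | .e0, .e0 => .e0
  | .e0, .na => .na
  | .e0, .nb => .nb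
  | .e0, .nc => .nc
  | .e0, .b => .b
  | .e0, .c => .c
  | .e0, .a => .a
  | .e0, .e1 => .e1
  | .na, .e0 => .na
  | .na, .na => .na
  | .na, .nb => .nb
  | .na, .nc => .nc
  | .na, .b => .b
  | .na, .c => .c
  | .na, .a => .a
  | .na, .e1 => .e1
  | .nb, .e0 => .nb
  | .nb, .na => .nb
  | .nb, .nb => .nb
  | .nb, .nc => .a
  | .nb, .b => .a
  | .nb, .c => .c
  | .nb, .a => .a
  | .nb, .e1 => .e1
  | .nc, .e0 => .nc
  | .nc, .na => .nc
  | .nc, .nb => .a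
  | .nc, .nc => .nc
  | .nc, .b => .b
  | .nc, .c => .a
  | .nc, .a => .a
  | .nc, .e1 => .e1
  | .b, .e0 => .b
  | .b, .na => .b
  | .b, .nb => .a
  | .b, .nc => .b
  | .b, .b => .b
  | .b, .c => .a
  | .b, .a => .a
  | .b, .e1 => .e1
  | .c, .e0 => .c
  | .c, .na => .c
  | .c, .nb => .c
  | .c, .nc => .a
  | .c, .b => .a
  | .c, .c => .c
  | .c, .a => .a
  | .c, .e1 => .e1
  | .a, .e0 => .a
  | .a, .na => .a
  | .a, .nb => .a
  | .a, .nc => .a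
  | .a, .b => .a
  | .a, .c => .a
  | .a, .a => .a
  | .a, .e1 => .e1
  | .e1, .e0 => .e1
  | .e1, .na => .e1
  | .e1, .nb => .e1
  | .e1, .nc => .e1
  | .e1, .b => .e1
  | .e1, .c => .e1
  | .e1, .a => .e1
  | .e1, .e1 => .e1
def A.inf : A → A → A
  | .e0, .e0 => .e0
  | .e0, .na => .e0
  | .e0, .nb => .e0
  | .e0, .nc => .e0
  | .e0, .b => .e0
  | .e0, .c => .e0
  | .e0, .a => .e0
  | .e0, .e1 => .e0
  | .na, .e0 => .e0
  | .na, .na => .na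
  | .na, .nb => .na
  | .na, .nc => .na
  | .na, .b => .na
  | .na, .c => .na
  | .na, .a => .na
  | .na, .e1 => .na
  | .nb, .e0 => .e0
  | .nb, .na => .na
  | .nb, .nb => .nb
  | .nb, .nc => .na
  | .nb, .b => .na
  | .nb, .c => .nb
  | .nb, .a => .nb
  | .nb, .e1 => .nb
  | .nc, .e0 => .e0
  | .nc, .na => .na
  | .nc, .nb => .na
  | .nc, .nc => .nc
  | .nc, .b => .nc
  | .nc, .c => .na
  | .nc, .a => .nc
  | .nc, .e1 => .nc
  | .b, .e0 => .e0
  | .b, .na => .na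
  | .b, .nb => .na
  | .b, .nc => .nc
  | .b, .b => .b
  | .b, .c => .na
  | .b, .a => .b
  | .b, .e1 => .b
  | .c, .e0 => .e0
  | .c, .na => .na
  | .c, .nb => .nb
  | .c, .nc => .na
  | .c, .b => .na
  | .c, .c => .c
  | .c, .a => .c
  | .c, .e1 => .c
  | .a, .e0 => .e0
  | .a, .na => .na
  | .a, .nb => .nb
  | .a, .nc => .nc
  | .a, .b => .b
  | .a, .c => .c
  | .a, .a => .a
  | .a, .e1 => .a
  | .e1, .e0 => .e0
  | .e1, .na => .na
  | .e1, .nb => .nb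
  | .e1, .nc => .nc
  | .e1, .b => .b
  | .e1, .c => .c
  | .e1, .a => .a
  | .e1, .e1 => .e1
def A.himp : A → A → A
  | .e0, .e0 => .e1
  | .e0, .na => .e1
  | .e0, .nb => .e1
  | .e0, .nc => .e1
  | .e0, .b => .e1
  | .e0, .c => .e1
  | .e0, .a => .e1
  | .e0, .e1 => .e1
  | .na, .e0 => .a
  | .na, .na => .e1
  | .na, .nb => .e1
  | .na, .nc => .e1
  | .na, .b => .e1
  | .na, .c => .e1
  | .na, .a => .e1
  | .na, .e1 => .e1
  | .nb, .e0 => .b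
  | .nb, .na => .b
  | .nb, .nb => .e1
  | .nb, .nc => .b
  | .nb, .b => .b
  | .nb, .c => .e1
  | .nb, .a => .e1
  | .nb, .e1 => .e1
  | .nc, .e0 => .c
  | .nc, .na => .c
  | .nc, .nb => .c
  | .nc, .nc => .e1
  | .nc, .b => .e1
  | .nc, .c => .c
  | .nc, .a => .e1
  | .nc, .e1 => .e1
  | .b, .e0 => .nb
  | .b, .na => .c
  | .b, .nb => .c
  | .b, .nc => .a
  | .b, .b => .e1
  | .b, .c => .c
  | .b, .a => .e1
  | .b, .e1 => .e1
  | .c, .e0 => .nc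
  | .c, .na => .b
  | .c, .nb => .a
  | .c, .nc => .b
  | .c, .b => .b
  | .c, .c => .e1
  | .c, .a => .e1
  | .c, .e1 => .e1
  | .a, .e0 => .na
  | .a, .na => .na
  | .a, .nb => .c
  | .a, .nc => .b
  | .a, .b => .b
  | .a, .c => .c
  | .a, .a => .e1
  | .a, .e1 => .e1
  | .e1, .e0 => .e0
  | .e1, .na => .na
  | .e1, .nb => .nb
  | .e1, .nc => .nc
  | .e1, .b => .b
  | .e1, .c => .c
  | .e1, .a => .a
  | .e1, .e1 => .e1
def A.leB : A → A → Bool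
  | .e0, .e0 => true
  | .e0, .na => true
  | .e0, .nb => true
  | .e0, .nc => true
  | .e0, .b => true
  | .e0, .c => true
  | .e0, .a => true
  | .e0, .e1 => true
  | .na, .e0 => false
  | .na, .na => true
  | .na, .nb => true
  | .na, .nc => true
  | .na, .b => true
  | .na, .c => true
  | .na, .a => true
  | .na, .e1 => true
  | .nb, .e0 => false
  | .nb, .na => false
  | .nb, .nb => true
  | .nb, .nc => false
  | .nb, .b => false
  | .nb, .c => true
  | .nb, .a => true
  | .nb, .e1 => true
  | .nc, .e0 => false
  | .nc, .na => false
  | .nc, .nb => false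
  | .nc, .nc => true
  | .nc, .b => true
  | .nc, .c => false
  | .nc, .a => true
  | .nc, .e1 => true
  | .b, .e0 => false
  | .b, .na => false
  | .b, .nb => false
  | .b, .nc => false
  | .b, .b => true
  | .b, .c => false
  | .b, .a => true
  | .b, .e1 => true
  | .c, .e0 => false
  | .c, .na => false
  | .c, .nb => false
  | .c, .nc => false
  | .c, .b => false
  | .c, .c => true
  | .c, .a => true
  | .c, .e1 => true
  | .a, .e0 => false
  | .a, .na => false
  | .a, .nb => false
  | .a, .nc => false
  | .a, .b => false
  | .a, .c => false
  | .a, .a => true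
  | .a, .e1 => true
  | .e1, .e0 => false
  | .e1, .na => false
  | .e1, .nb => false
  | .e1, .nc => false
  | .e1, .b => false
  | .e1, .c => false
  | .e1, .a => false
  | .e1, .e1 => true

instance : LE A := ⟨fun x y => A.leB x y = true⟩
instance : DecidableRel (· ≤ · : A → A → Prop) := fun x y => inferInstanceAs (Decidable (_ = true))

instance : Lattice A where
  le := (· ≤ ·)
  le_refl := by decide
  le_trans := by decide
  le_antisymm := by decide
  sup := A.sup
  inf := A.inf
  le_sup_left := by decide
  le_sup_right := by decide
  sup_le := by decide
  inf_le_left := by decide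
  inf_le_right := by decide
  le_inf := by decide

instance : CommMonoid A where
  mul := A.mul
  one := A.e1
  mul_assoc := by decide
  one_mul := by decide
  mul_one := by decide
  mul_comm := by decide

instance : HImp A := ⟨A.himp⟩

instance : CIBRL A where
  le_top := by decide
  resid := by decide
  zero := A.e0
  zero_le := by decide

theorem stmt13 :
    ∃ (α : Type) (_ : CIBRL α),
      (∀ a : α, (a ⇨ 0) ⇨ 0 = a) ∧
      (∀ a : α, a * a ≤ a * a * a) ∧
      Nat.card α = 8 ∧
      ¬ (∀ x y z : α, x ⊓ (y ⊔ z) = (x ⊓ y) ⊔ (x ⊓ z)) := by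
  refine ⟨A, inferInstance, by decide, by decide, ?_, fun h => absurd (h A.b A.c A.nc) (by decide)⟩
  simp [Nat.card_eq_fintype_card]
  decide
end

section
/- There exist an S'-algebra and elements p, q in it such that (p ∧ ¬p) ⇒ q ≠ 1 (failure of ex contradictione quodlibet). -/
inductive L3 : Type | z | h | o
  deriving DecidableEq

namespace L3

instance : Fintype L3 :=
  ⟨⟨{z, h, o}, by decide⟩, by intro x; cases x <;> decide⟩

def toFin : L3 → Fin 3
  | z => 0 | h => 1 | o => 2

instance : LinearOrder L3 :=
  LinearOrder.lift' toFin (by intro a b; cases a <;> cases b <;> decide)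

instance : Lattice L3 := inferInstance

def mulFn : L3 → L3 → L3
  | o, x => x
  | x, o => x
  | _, _ => z

def himpFn : L3 → L3 → L3
  | z, _ => o
  | h, z => h
  | h, _ => o
  | o, x => x

instance : CommMonoid L3 where
  mul := mulFn
  one := o
  mul_assoc := by decide
  mul_comm := by decide
  one_mul := by decide
  mul_one := by decide

instance : HImp L3 := ⟨himpFn⟩

instance : CIBRL L3 where
  zero := z
  zero_le := by decide
  le_top := by decide
  resid := by decide

end L3

theorem stmt15 :
    ∃ (α : Type) (_ : CIBRL α),
      (∀ a : α, (a ⇨ 0) ⇨ 0 = a) ∧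
      (∀ a : α, a * a ≤ a * a * a) ∧
      ∃ p q : α, (p ⊓ (p ⇨ 0)) ⇨ q ≠ 1 := by
  exact ⟨L3, inferInstance, by decide, by decide, L3.h, L3.z, by decide⟩
end

section
/- There exist an S'-algebra and elements p, q such that (p ⇒ (p ⇒ q)) ⇒ (p ⇒ q) ≠ 1 (failure of contraction). -/
/-- Łukasiewicz 3-element chain. -/
inductive L3_s16 : Type where
  | z | h | o
  deriving DecidableEq, Repr

instance : Fintype L3_s16 := ⟨{L3_s16.z, L3_s16.h, L3_s16.o}, by intro x; cases x <;> simp⟩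

namespace L3_s16

def toNat : L3_s16 → Nat
  | z => 0 | h => 1 | o => 2

instance : LE L3_s16 := ⟨fun a b => a.toNat ≤ b.toNat⟩
instance : LT L3_s16 := ⟨fun a b => a.toNat < b.toNat⟩
instance : DecidableRel (· ≤ · : L3_s16 → L3_s16 → Prop) := fun a b => inferInstanceAs (Decidable (_ ≤ _))
instance : DecidableRel (· < · : L3_s16 → L3_s16 → Prop) := fun a b => inferInstanceAs (Decidable (_ < _))

def mul' : L3_s16 → L3_s16 → L3_s16
  | o, x => x
  | x, o => x
  | _, _ => z

def himp' : L3_s16 → L3_s16 → L3_s16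
  | z, _ => o
  | h, z => h
  | h, _ => o
  | o, x => x

instance : Mul L3_s16 := ⟨mul'⟩
instance inst_s16 : HImp L3_s16 := ⟨himp'⟩
instance : One L3_s16 := ⟨o⟩
instance : Zero L3_s16 := ⟨z⟩
instance : Min L3_s16 := ⟨fun a b => if a ≤ b then a else b⟩
instance : Max L3_s16 := ⟨fun a b => if a ≤ b then b else a⟩

instance inst_s16_2 : Lattice L3_s16 where
  lt := (· < ·)
  lt_iff_le_not_ge := by decide
  le_refl := by decide
  le_trans := by decide
  le_antisymm := by decide
  inf := min
  sup := max
  le_sup_left := by decide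
  le_sup_right := by decide
  sup_le := by decide
  inf_le_left := by decide
  inf_le_right := by decide
  le_inf := by decide

instance inst_s16_3 : CommMonoid L3_s16 where
  mul_assoc := by decide
  one_mul := by decide
  mul_one := by decide
  mul_comm := by decide

instance inst_s16_4 : CIBRL L3_s16 where
  le_top := by decide
  resid := by decide
  zero_le := by decide

end L3_s16

theorem stmt16 :
    ∃ (α : Type) (_ : CIBRL α),
      (∀ a : α, (a ⇨ 0) ⇨ 0 = a) ∧
      (∀ a : α, a * a ≤ a * a * a) ∧
      ∃ p q : α, (p ⇨ (p ⇨ q)) ⇨ (p ⇨ q) ≠ 1 := by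
  exact ⟨L3_s16, inferInstance, by decide, by decide, L3_s16.h, L3_s16.z, by decide⟩
end

section
/- Let A be a three-potent CIRL and A* its Galatos–Raftery double, obtained by adjoining a disjoint copy ¬A below A with operations extended by a * ¬b := ¬(a ⇒ b), ¬a * ¬b := ¬1, a ⇒ ¬b := ¬(a*b), ¬a ⇒ ¬b := b ⇒ a, ¬a ⇒ b := 1, ¬(¬a) := a, and De Morgan extensions of the lattice operations. Then A* is a three-potent involutive CIBRL (an S'-algebra). -/
/-! The Galatos–Raftery doubling construction `A* = A ∪ ¬A`, encoded on `α ⊕ α`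
where `.inr a` is the element `a ∈ A` and `.inl a` is its disjoint copy `¬a`. -/

variable {α : Type*} [CIRL α]

/-- The order on the double: it extends the order of `A`, puts every `¬a`
below every `b ∈ A`, and `¬a ≤ ¬b` iff `b ≤ a`. -/
def dle : α ⊕ α → α ⊕ α → Prop
  | .inr a, .inr b => a ≤ b
  | .inl _, .inr _ => True
  | .inr _, .inl _ => False
  | .inl a, .inl b => b ≤ a

/-- Join on the double (lattice operations extended via De Morgan laws). -/
def dsup : α ⊕ α → α ⊕ α → α ⊕ α
  | .inr a, .inr b => .inr (a ⊔ b)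
  | .inl _, .inr b => .inr b
  | .inr a, .inl _ => .inr a
  | .inl a, .inl b => .inl (a ⊓ b)

/-- Meet on the double (lattice operations extended via De Morgan laws). -/
def dinf : α ⊕ α → α ⊕ α → α ⊕ α
  | .inr a, .inr b => .inr (a ⊓ b)
  | .inl a, .inr _ => .inl a
  | .inr _, .inl b => .inl b
  | .inl a, .inl b => .inl (a ⊔ b)

/-- Monoid operation on the double: `a * ¬b := ¬(a ⇨ b)`, `¬a * ¬b := ¬1`. -/
def dmul : α ⊕ α → α ⊕ α → α ⊕ α
  | .inr a, .inr b => .inr (a * b)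
  | .inr a, .inl b => .inl (a ⇨ b)
  | .inl a, .inr b => .inl (b ⇨ a)
  | .inl _, .inl _ => .inl 1

/-- Implication on the double: `a ⇨ ¬b := ¬(a*b)`, `¬a ⇨ ¬b := b ⇨ a`,
`¬a ⇨ b := 1`. -/
def dimp : α ⊕ α → α ⊕ α → α ⊕ α
  | .inr a, .inr b => .inr (a ⇨ b)
  | .inr a, .inl b => .inl (a * b)
  | .inl _, .inr _ => .inr 1
  | .inl a, .inl b => .inr (b ⇨ a)

/-- Top element `1` of the double. -/
def done : α ⊕ α := .inr 1

/-- Bottom element `0 := ¬1` of the double. -/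
def dzero : α ⊕ α := .inl 1

/-- Negation `¬x := x ⇨ 0` on the double. -/
def dneg (x : α ⊕ α) : α ⊕ α := dimp x dzero


section Helpers
variable {α : Type*} [CIRL α]

private lemma c_le_one (a : α) : a ≤ 1 := CIRL.le_top a

private lemma c_mul_imp_le (a d : α) : a * (a ⇨ d) ≤ d := (CIRL.resid a _ d).mpr le_rfl

private lemma c_mul_mono (a : α) {x y : α} (h : x ≤ y) : a * x ≤ a * y :=
  (CIRL.resid a x (a*y)).mpr (h.trans ((CIRL.resid a y (a*y)).mp le_rfl))

private lemma c_imp_one (a : α) : a ⇨ (1:α) = 1 :=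
  le_antisymm (c_le_one _) ((CIRL.resid a 1 1).mp (c_le_one _))

private lemma c_one_imp (a : α) : (1:α) ⇨ a = a := by
  apply le_antisymm
  · have := (CIRL.resid (1:α) (1 ⇨ a) a).mpr le_rfl
    rwa [one_mul] at this
  · exact (CIRL.resid 1 a a).mp (by rw [one_mul])

private lemma c_curry (a b c : α) : (a*b) ⇨ c = a ⇨ (b ⇨ c) := by
  apply le_antisymm
  · rw [← CIRL.resid, ← CIRL.resid]
    have h1 : (a*b) * ((a*b) ⇨ c) ≤ c := c_mul_imp_le _ _
    have h2 : b * (a * ((a*b) ⇨ c)) = (a*b) * ((a*b) ⇨ c) := by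
      rw [← mul_assoc, mul_comm b a]
    rw [h2]; exact h1
  · refine (CIRL.resid _ _ _).mp ?_
    have h2 : (a*b) * (a ⇨ (b ⇨ c)) = b * (a * (a ⇨ (b ⇨ c))) := by
      rw [← mul_assoc, mul_comm a b]
    rw [h2]
    exact le_trans (c_mul_mono b (c_mul_imp_le a _)) (c_mul_imp_le b c)

private lemma c_imp_comm (a b c : α) : a ⇨ (b ⇨ c) = b ⇨ (a ⇨ c) := by
  rw [← c_curry, mul_comm, c_curry]

private lemma c_exchange (a b c : α) : c ≤ b ⇨ a ↔ b ≤ c ⇨ a := by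
  rw [← CIRL.resid, mul_comm, CIRL.resid]

end Helpers

/-- If `A` is a three-potent CIRL, then its Galatos–Raftery double `A*` is a
three-potent involutive CIBRL (an `S'`-algebra): `dle` is a partial order for
which `dsup`/`dinf` are join/meet, `done` is the top and `dzero` the bottom,
`dmul` is a commutative monoid operation with unit `done`, `(dmul, dimp)` is a
residuated pair, the negation is involutive, and three-potency holds. -/

theorem stmt17 {α : Type*} [CIRL α] (h3 : ∀ a : α, a * a ≤ a * a * a) :
    (∀ x : α ⊕ α, dle x x) ∧
    (∀ x y : α ⊕ α, dle x y → dle y x → x = y) ∧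
    (∀ x y z : α ⊕ α, dle x y → dle y z → dle x z) ∧
    (∀ x y : α ⊕ α, dle x (dsup x y)) ∧
    (∀ x y : α ⊕ α, dle y (dsup x y)) ∧
    (∀ x y z : α ⊕ α, dle x z → dle y z → dle (dsup x y) z) ∧
    (∀ x y : α ⊕ α, dle (dinf x y) x) ∧
    (∀ x y : α ⊕ α, dle (dinf x y) y) ∧
    (∀ x y z : α ⊕ α, dle z x → dle z y → dle z (dinf x y)) ∧
    (∀ x : α ⊕ α, dle x done) ∧
    (∀ x : α ⊕ α, dle dzero x) ∧
    (∀ x y : α ⊕ α, dmul x y = dmul y x) ∧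
    (∀ x y z : α ⊕ α, dmul (dmul x y) z = dmul x (dmul y z)) ∧
    (∀ x : α ⊕ α, dmul done x = x) ∧
    (∀ x y z : α ⊕ α, dle (dmul x y) z ↔ dle y (dimp x z)) ∧
    (∀ x : α ⊕ α, dimp (dimp x dzero) dzero = x) ∧
    (∀ x : α ⊕ α, dle (dmul x x) (dmul x (dmul x x))) := by
  refine ⟨?_, ?_, ?_, ?_, ?_, ?_, ?_, ?_, ?_, ?_, ?_, ?_, ?_, ?_, ?_, ?_, ?_⟩
  · rintro (a|a) <;> simp [dle]
  · rintro (a|a) (b|b) h h' <;> simp_all [dle] <;>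
      first
        | exact le_antisymm h h'
        | exact le_antisymm h' h
  · rintro (a|a) (b|b) (c|c) h h' <;> simp_all [dle] <;>
      first
        | exact le_trans h h'
        | exact le_trans h' h
  · rintro (a|a) (b|b) <;> simp [dle, dsup]
  · rintro (a|a) (b|b) <;> simp [dle, dsup]
  · rintro (a|a) (b|b) (c|c) h h' <;> simp_all [dle, dsup] <;>
      first
        | exact sup_le h h'
        | exact le_inf h h'
  · rintro (a|a) (b|b) <;> simp [dle, dinf]
  · rintro (a|a) (b|b) <;> simp [dle, dinf]
  · rintro (a|a) (b|b) (c|c) h h' <;> simp_all [dle, dinf] <;>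
      first
        | exact le_inf h h'
        | exact sup_le h h'
  · rintro (a|a) <;> simp [dle, done, c_le_one]
  · rintro (a|a) <;> simp [dle, dzero, c_le_one]
  · rintro (a|a) (b|b) <;> simp [dmul, mul_comm]
  · rintro (a|a) (b|b) (c|c) <;> simp [dmul, mul_assoc, c_curry, c_imp_one, c_imp_comm]
  · rintro (a|a) <;> simp [dmul, done, c_one_imp]
  · rintro (a|a) (b|b) (c|c) <;>
      simp only [dmul, dimp, dle, c_le_one, iff_true, true_iff, le_refl] <;>
      first
        | trivial
        | exact c_exchange _ _ _
        | exact CIRL.resid _ _ _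
        | exact (CIRL.resid _ _ _).symm
        | (rw [mul_comm]; exact (CIRL.resid _ _ _).symm)
        | exact c_le_one _
        | exact iff_of_true trivial (c_le_one _)
        | exact iff_of_true (c_le_one _) trivial
  · rintro (a|a) <;> simp [dimp, dzero, c_one_imp, mul_one]
  · rintro (a|a) <;> simp [dmul, dle, c_le_one] <;> rw [← mul_assoc] <;> exact h3 a
end
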